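/- Let A be a biquaternion division algebra over a field F of characteristic 2, and let x, z ∈ A be Artin-Schreier elements (x² + x ∈ F, z² + z ∈ F) that do not commute. Set r = x z + z x and t = r + z. Then x r + r x = r, x t + t x = 0, r t + t r + r = 0, and s = x + t is central in the subalgebra F[x,z]; consequently F[x,z] is a quaternion algebra over its center, which is either F or a quadratic extension of F. -/
import Mathlib

set_option maxHeartbeats 1000000

/-- Non-commuting Artin-Schreier elements in a biquaternion division algebra in
characteristic 2: with `r = xz + zx`, `t = r + z`, `s = x + t`, one has
`xr + rx = r`, `xt + tx = 0`, `rt + tr + r = 0`, `s` is central in the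
subalgebra `F[x,z]`, and `F[x,z]` is a quaternion algebra over its center
(which is `F` or a quadratic extension, so `dim_F F[x,z]` is `4` or `8`). -/

theorem biquaternion_artinSchreier_pair
    {F A : Type*} [Field F] [DivisionRing A] [Algebra F A] [CharP F 2]
    (hcentral : ∀ u : A, (∀ v : A, u * v = v * u) → ∃ c : F, u = algebraMap F A c)
    (hdim : Module.finrank F A = 16)
    (x z : A) (a b : F)
    (hx : x * x + x = algebraMap F A a) (hz : z * z + z = algebraMap F A b)
    (hne : x * z ≠ z * x) :
    x * (x * z + z * x) + (x * z + z * x) * x = x * z + z * x ∧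
    x * (x * z + z * x + z) + (x * z + z * x + z) * x = 0 ∧
    (x * z + z * x) * (x * z + z * x + z) + (x * z + z * x + z) * (x * z + z * x)
        + (x * z + z * x) = 0 ∧
    (∀ w ∈ Algebra.adjoin F ({x, z} : Set A),
        (x + (x * z + z * x + z)) * w = w * (x + (x * z + z * x + z))) ∧
    (Module.finrank F (Algebra.adjoin F ({x, z} : Set A)) = 4 ∨
      Module.finrank F (Algebra.adjoin F ({x, z} : Set A)) = 8) := by
  have hF2 : (1 : F) + 1 = 0 := by
    have := CharP.cast_eq_zero F 2; push_cast at this; linear_combination this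
  have h1 : (1 : A) + 1 = 0 := by
    have : algebraMap F A (1 + 1) = 0 := by rw [hF2, map_zero]
    simpa using this
  have htwo : ∀ y : A, y + y = 0 := fun y => by
    have := congrArg (· * y) h1
    simpa [add_mul] using this
  have hflip : ∀ u v : A, u + v = 0 → u = v := fun u v h => by
    calc u = u + (v + v) := by rw [htwo, add_zero]
    _ = (u + v) + v := by rw [add_assoc]
    _ = v := by rw [h, zero_add]
  have hxx : x * x = algebraMap F A a + x := by
    refine hflip _ _ ?_
    have e : x*x + (algebraMap F A a + x) = (x*x + x) + algebraMap F A a := by abel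
    rw [e, hx]; exact htwo _
  have hzz : z * z = algebraMap F A b + z := by
    refine hflip _ _ ?_
    have e : z*z + (algebraMap F A b + z) = (z*z + z) + algebraMap F A b := by abel
    rw [e, hz]; exact htwo _
  set r := x*z + z*x with hr
  clear_value r
  have F1 : x * r + r * x = r := by
    have e1 : x * r + r * x = (x*x)*z + z*(x*x) + (x*(z*x) + x*(z*x)) := by
      rw [hr]; noncomm_ring
    rw [e1, htwo, add_zero, hxx, add_mul, mul_add, Algebra.commutes]
    have e2 : z * algebraMap F A a + x*z + (z * algebraMap F A a + z*x)
        = (z * algebraMap F A a + z * algebraMap F A a) + (x*z + z*x) := by abel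
    rw [e2, htwo, zero_add, ← hr]
  have F3 : z * r + r * z = r := by
    have e1 : z * r + r * z = (z*z)*x + x*(z*z) + (z*(x*z) + z*(x*z)) := by
      rw [hr]; noncomm_ring
    rw [e1, htwo, add_zero, hzz, add_mul, mul_add, Algebra.commutes]
    have e2 : x * algebraMap F A b + z*x + (x * algebraMap F A b + x*z)
        = (x * algebraMap F A b + x * algebraMap F A b) + (x*z + z*x) := by abel
    rw [e2, htwo, zero_add, ← hr]
  set t := r + z with ht
  clear_value t
  have F2 : x * t + t * x = 0 := by
    have e1 : x * t + t * x = (x*r + r*x) + (x*z + z*x) := by rw [ht]; noncomm_ring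
    rw [e1, F1, ← hr]; exact htwo r
  have F4 : r * t + t * r + r = 0 := by
    have e1 : r * t + t * r + r = (r*r + r*r) + ((r*z + z*r) + r) := by rw [ht]; noncomm_ring
    rw [e1, htwo, zero_add]
    have e2 : r*z + z*r = z*r + r*z := by abel
    rw [e2, F3]; exact htwo r
  set s := x + t with hs
  clear_value s
  have hsx : s * x = x * s := by
    refine (hflip _ _ ?_).symm
    have e1 : x * s + s * x = (x*x + x*x) + (x*t + t*x) := by rw [hs]; noncomm_ring
    rw [e1, htwo, F2, zero_add]
  have hsz : s * z = z * s := by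
    refine (hflip _ _ ?_).symm
    have e1 : z * s + s * z = (x*z + z*x) + (r*z + z*r) + (z*z + z*z) := by
      rw [hs, ht]; noncomm_ring
    have e2 : r*z + z*r = z*r + r*z := by abel
    rw [e1, e2, F3, ← hr, htwo, zero_add]; exact htwo _
  have hrr : r * r = s*s + s + algebraMap F A a + algebraMap F A b := by
    refine hflip _ _ ?_
    have e0 : s*s = x*x + r*r + z*z + ((x*r + r*x) + ((x*z + z*x) + (r*z + z*r))) := by
      rw [hs, ht]; noncomm_ring
    have e2 : r*z + z*r = z*r + r*z := by abel
    rw [e0, F1, e2, F3, ← hr]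
    have e3 : s = x + r + z := by rw [hs, ht]; abel
    rw [hxx, hzz, e3]
    have e4 : r * r + (algebraMap F A a + x + r * r + (algebraMap F A b + z) + (r + (r + r)) +
        (x + r + z) + algebraMap F A a + algebraMap F A b) =
        (r*r + r*r) + (x + x) + (z + z) + (r + (r + (r + r))) +
          (algebraMap F A a + algebraMap F A a) + (algebraMap F A b + algebraMap F A b) := by
      abel
    rw [e4]; simp [htwo]
  have e3 : s = x + r + z := by rw [hs, ht]; abel
  have hrx : r * x = x * r + r := by
    refine hflip _ _ ?_
    have e : r*x + (x*r + r) = (x*r + r*x) + r := by abel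
    rw [e, F1]; exact htwo _
  -- the subalgebra B
  have hA : FiniteDimensional F A := FiniteDimensional.of_finrank_pos (by rw [hdim]; norm_num)
  set B := Algebra.adjoin F ({x, z} : Set A) with hB
  have hxB : x ∈ B := Algebra.subset_adjoin (by simp)
  have hzB : z ∈ B := Algebra.subset_adjoin (by simp)
  have hBfin : FiniteDimensional F B :=
    FiniteDimensional.of_injective B.val.toLinearMap Subtype.val_injective
  -- s is central in B
  have hscomm : ∀ w ∈ B, s * w = w * s := by
    intro w hw
    induction hw using Algebra.adjoin_induction with
    | mem y hy =>
      rcases hy with rfl | hy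
      · exact hsx
      · rcases hy with rfl; exact hsz
    | algebraMap c => exact (Algebra.commutes c s).symm
    | add u v hu hv ihu ihv => rw [mul_add, add_mul, ihu, ihv]
    | mul u v hu hv ihu ihv => rw [← mul_assoc, ihu, mul_assoc, ihv, mul_assoc]
  refine ⟨F1, F2, F4, hscomm, ?_⟩
  -- dimension argument
  letI : DivisionRing B := divisionRingOfFiniteDimensional F B
  have hdvd : Module.finrank F B ∣ 16 := by
    refine ⟨Module.finrank B A, ?_⟩
    rw [← hdim]
    exact (Module.finrank_mul_finrank F B A).symm
  -- finrank F B ≥ 3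
  have hr0 : r ≠ 0 := by
    intro h
    exact hne (hflip _ _ (by rw [← hr, h]))
  have hxcomm : ∀ c d : F, z = c • (1:A) + d • x → False := by
    intro c d h
    apply hne
    rw [h, mul_add, add_mul, mul_smul_comm, smul_mul_assoc, mul_one, one_mul,
      mul_smul_comm, smul_mul_assoc]
  have hx1 : x ∉ Submodule.span F ({1} : Set A) := by
    intro h
    rw [Submodule.mem_span_singleton] at h
    obtain ⟨c, hc⟩ := h
    apply hne
    rw [← hc, smul_mul_assoc, mul_smul_comm, one_mul, mul_one]
  have hz2 : z ∉ Submodule.span F ({(1:A), x} : Set A) := by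
    intro h
    rw [Submodule.mem_span_insert] at h
    obtain ⟨c, w, hw, hzw⟩ := h
    rw [Submodule.mem_span_singleton] at hw
    obtain ⟨d, hd⟩ := hw
    exact hxcomm c d (by rw [hzw, ← hd])
  have hchain1 : Submodule.span F ({1} : Set A) < Submodule.span F ({(1:A), x} : Set A) := by
    refine lt_of_le_of_ne (Submodule.span_mono (by simp)) ?_
    intro h
    exact hx1 (h ▸ Submodule.subset_span (by simp))
  have hchain2 : Submodule.span F ({(1:A), x} : Set A)
      < Submodule.span F ({(1:A), x, z} : Set A) := by
    refine lt_of_le_of_ne (Submodule.span_mono (by intro y hy; simp at hy; rcases hy with rfl|rfl <;> simp)) ?_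
    intro h
    exact hz2 (h ▸ Submodule.subset_span (by simp))
  have hle3 : Submodule.span F ({(1:A), x, z} : Set A) ≤ Subalgebra.toSubmodule B := by
    rw [Submodule.span_le]
    intro y hy
    simp only [Set.mem_insert_iff, Set.mem_singleton_iff] at hy
    rcases hy with rfl | rfl | rfl
    · exact B.one_mem
    · exact hxB
    · exact hzB
  have h3 : 3 ≤ Module.finrank F B := by
    have e1 : Module.finrank F (Submodule.span F ({1} : Set A)) = 1 := by
      rw [finrank_span_singleton (one_ne_zero)]
    have l1 := Submodule.finrank_lt_finrank_of_lt hchain1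
    have l2 := Submodule.finrank_lt_finrank_of_lt hchain2
    have l3 := Submodule.finrank_mono hle3
    rw [Subalgebra.finrank_toSubmodule] at l3
    omega
  -- finrank F B ≠ 16
  have h16 : Module.finrank F B ≠ 16 := by
    intro h16
    have hBtop : Subalgebra.toSubmodule B = ⊤ := by
      apply Submodule.eq_top_of_finrank_eq
      rw [Subalgebra.finrank_toSubmodule, h16, hdim]
    have hall : ∀ v : A, v ∈ B := by
      intro v
      have : v ∈ Subalgebra.toSubmodule B := by rw [hBtop]; trivial
      exact this
    obtain ⟨c, hsc⟩ := hcentral s (fun v => hscomm v (hall v))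
    have hg : r * r = algebraMap F A (c*c + c + a + b) := by
      rw [hrr, hsc, ← map_mul, ← map_add, ← map_add, ← map_add]
    set g := c*c + c + a + b with hgdef
    set M := Submodule.span F ({1, x, r, x*r} : Set A) with hM
    have hM1 : (1:A) ∈ M := Submodule.subset_span (by simp)
    have hMx : x ∈ M := Submodule.subset_span (by simp)
    have hMr : r ∈ M := Submodule.subset_span (by simp)
    have hMxr : x*r ∈ M := Submodule.subset_span (by simp)
    have hsmul : ∀ (c' : F) (y : A), algebraMap F A c' * y = c' • y :=
      fun c' y => (Algebra.smul_def c' y).symm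
    have hsmul' : ∀ (c' : F) (y : A), y * algebraMap F A c' = c' • y :=
      fun c' y => by rw [← Algebra.commutes c' y]; exact (Algebra.smul_def c' y).symm
    -- products of generators
    have pxx : x*x ∈ M := by
      rw [hxx, Algebra.algebraMap_eq_smul_one]
      exact M.add_mem (M.smul_mem a hM1) hMx
    have pxxr : x*(x*r) ∈ M := by
      rw [← mul_assoc, hxx, add_mul, hsmul]
      exact M.add_mem (M.smul_mem a hMr) hMxr
    have prx : r*x ∈ M := by rw [hrx]; exact M.add_mem hMxr hMr
    have prr : r*r ∈ M := by
      rw [hg, Algebra.algebraMap_eq_smul_one]; exact M.smul_mem g hM1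
    have hrxr : r*(x*r) = g • x + g • (1:A) := by
      rw [← mul_assoc, hrx, add_mul, mul_assoc, hg, hsmul',
        Algebra.algebraMap_eq_smul_one]
    have prxr : r*(x*r) ∈ M := by
      rw [hrxr]; exact M.add_mem (M.smul_mem g hMx) (M.smul_mem g hM1)
    have pxrx : (x*r)*x ∈ M := by
      have e : (x*r)*x = a • r := by
        rw [mul_assoc, hrx, mul_add, ← mul_assoc, hxx, add_mul, hsmul]
        have e2 : a • r + x * r + x * r = a • r + (x*r + x*r) := by abel
        rw [e2, htwo, add_zero]
      rw [e]; exact M.smul_mem a hMr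
    have pxrr : (x*r)*r ∈ M := by
      rw [mul_assoc, hg, hsmul']; exact M.smul_mem g hMx
    have pxrxr : (x*r)*(x*r) ∈ M := by
      have e : (x*r)*(x*r) = (g*a) • (1:A) := by
        rw [show (x*r)*(x*r) = x*(r*(x*r)) by noncomm_ring, hrxr, mul_add,
          mul_smul_comm, mul_smul_comm, mul_one, hxx, smul_add]
        rw [Algebra.algebraMap_eq_smul_one, smul_smul]
        have e2 : (g*a) • (1:A) + g • x + g • x = (g*a) • (1:A) + (g • x + g • x) := by abel
        rw [e2, htwo, add_zero]
      rw [e]; exact M.smul_mem _ hM1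
    have hMmul : ∀ u ∈ M, ∀ v ∈ M, u * v ∈ M := by
      intro u hu
      induction hu using Submodule.span_induction with
      | mem u hu =>
        intro v hv
        induction hv using Submodule.span_induction with
        | mem v hv =>
          simp only [Set.mem_insert_iff, Set.mem_singleton_iff] at hu hv
          rcases hu with rfl | rfl | rfl | rfl <;> rcases hv with rfl | rfl | rfl | rfl <;>
            first
              | assumption
              | (simp only [one_mul, mul_one]; assumption)
        | zero => rw [mul_zero]; exact M.zero_mem
        | add v w hv hw ihv ihw => rw [mul_add]; exact M.add_mem ihv ihw
        | smul c' v hv ihv => rw [mul_smul_comm]; exact M.smul_mem c' ihv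
      | zero => intro v hv; rw [zero_mul]; exact M.zero_mem
      | add u w hu hw ihu ihw =>
        intro v hv; rw [add_mul]; exact M.add_mem (ihu v hv) (ihw v hv)
      | smul c' u hu ihu =>
        intro v hv; rw [smul_mul_assoc]; exact M.smul_mem c' (ihu v hv)
    have hzM : z ∈ M := by
      have ez : z = s + x + r := by
        refine hflip _ _ ?_
        rw [e3]
        have e5 : z + (x + r + z + x + r) = (z + z) + (x + x) + (r + r) := by abel
        rw [e5]; simp [htwo]
      rw [ez, hsc, Algebra.algebraMap_eq_smul_one]
      exact M.add_mem (M.add_mem (M.smul_mem c hM1) hMx) hMr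
    have hBM : ∀ w ∈ B, w ∈ M := by
      intro w hw
      induction hw using Algebra.adjoin_induction with
      | mem y hy =>
        rcases hy with rfl | hy
        · exact hMx
        · rcases hy with rfl; exact hzM
      | algebraMap c' =>
        rw [Algebra.algebraMap_eq_smul_one]; exact M.smul_mem c' hM1
      | add u v hu hv ihu ihv => exact M.add_mem ihu ihv
      | mul u v hu hv ihu ihv => exact hMmul u ihu v ihv
    have hleM : Subalgebra.toSubmodule B ≤ M := fun w hw => hBM w hw
    have hMcard : Module.finrank F M ≤ 4 := by
      classical
      have := finrank_span_le_card (R := F) ({1, x, r, x*r} : Set A)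
      refine le_trans this ?_
      have hsub : ({1, x, r, x*r} : Set A).toFinset ⊆ ({1, x, r, x*r} : Finset A) := by
        intro y hy; simpa using hy
      have c0 := Finset.card_le_card hsub
      have c1 := Finset.card_insert_le (1:A) ({x, r, x*r} : Finset A)
      have c2 := Finset.card_insert_le x ({r, x*r} : Finset A)
      have c3 := Finset.card_insert_le r ({x*r} : Finset A)
      have c4 : ({x*r} : Finset A).card = 1 := Finset.card_singleton _
      omega
    have hfle : Module.finrank F B ≤ 4 := by
      have := Submodule.finrank_mono hleM
      rw [Subalgebra.finrank_toSubmodule] at this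
      exact le_trans this hMcard
    omega
  -- conclude
  have hle : Module.finrank F B ≤ 16 := Nat.le_of_dvd (by norm_num) hdvd
  set n := Module.finrank F B with hn
  have : n = 4 ∨ n = 8 := by
    interval_cases n <;> revert hdvd h16 <;> decide
  exact this
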